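/- The subgroup VP_n = ker(π : VB_n → S_n) is generated by the elements μ_{ij} for all i ≠ j, where μ_{i,i+1} = σ_i v_i, μ_{ij} = v_{j-1}···v_{i+1} μ_{i,i+1} v_{i+1}···v_{j-1} for i < j, and μ_{ji} = t_{ij} μ_{ij} t_{ij} with t_{ij} the word in the v's representing the transposition (i j). -/

import Mathlib

/-- Generators of the virtual braid group `VB n`: `Sum.inl i` is the braid generator
`σ_{i+1}` and `Sum.inr i` is the virtual generator `v_{i+1}` (0-indexed `i : Fin (n-1)`). -/
abbrev VBGen (n : ℕ) := Fin (n-1) ⊕ Fin (n-1)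

namespace VBDef

def S {n : ℕ} (i : Fin (n-1)) : FreeGroup (VBGen n) := FreeGroup.of (Sum.inl i)
def V {n : ℕ} (i : Fin (n-1)) : FreeGroup (VBGen n) := FreeGroup.of (Sum.inr i)

/-- The defining relations of the virtual braid group, as elements of the free group. -/
def VBRels (n : ℕ) : Set (FreeGroup (VBGen n)) :=
  { r | (∃ i j : Fin (n-1), (i : ℕ) + 1 = j ∧
          r = S i * S j * S i * (S j * S i * S j)⁻¹) ∨
        (∃ i j : Fin (n-1), (i : ℕ) + 2 ≤ j ∧
          r = S i * S j * (S j * S i)⁻¹) ∨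
        (∃ i j : Fin (n-1), (i : ℕ) + 1 = j ∧
          r = V i * V j * V i * (V j * V i * V j)⁻¹) ∨
        (∃ i j : Fin (n-1), (i : ℕ) + 2 ≤ j ∧
          r = V i * V j * (V j * V i)⁻¹) ∨
        (∃ i : Fin (n-1), r = V i * V i) ∨
        (∃ i j : Fin (n-1), (i : ℕ) + 1 = j ∧
          r = V i * S j * V i * (V j * S i * V j)⁻¹) ∨
        (∃ i j : Fin (n-1), ((i : ℕ) + 2 ≤ j ∨ (j : ℕ) + 2 ≤ i) ∧
          r = S i * V j * (V j * S i)⁻¹) }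

end VBDef

/-- The virtual braid group on `n` strands, as a presented group. -/
abbrev VB (n : ℕ) := PresentedGroup (VBDef.VBRels n)

/-- The braid generator `σ` (0-indexed). -/
def σg {n : ℕ} (i : Fin (n-1)) : VB n := PresentedGroup.of (Sum.inl i)

/-- The virtual generator `v` (0-indexed). -/
def vg {n : ℕ} (i : Fin (n-1)) : VB n := PresentedGroup.of (Sum.inr i)

/-- The strand position `i` in `Fin n`. -/
def pos0 {n : ℕ} (i : Fin (n-1)) : Fin n := ⟨i.1, by have := i.2; omega⟩

/-- The strand position `i+1` in `Fin n`. -/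
def pos1 {n : ℕ} (i : Fin (n-1)) : Fin n := ⟨i.1 + 1, by have := i.2; omega⟩

/-- `σ` with natural-number index (0-based); junk value `1` out of range. -/
def sgn (n : ℕ) (i : ℕ) : VB n := if h : i < n - 1 then σg ⟨i, h⟩ else 1

/-- `v` with natural-number index (0-based); junk value `1` out of range. -/
def vgn (n : ℕ) (i : ℕ) : VB n := if h : i < n - 1 then vg ⟨i, h⟩ else 1

/-- For strands `i < j` (0-based), the connecting string
`μ_{ij} = v_{j-1} ⋯ v_{i+1} · (σ_i v_i) · v_{i+1} ⋯ v_{j-1}`. -/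
def muUp (n i j : ℕ) : VB n :=
  ((List.range (j - i - 1)).map (fun k => vgn n (j - 1 - k))).prod *
    (sgn n i * vgn n i) *
    ((List.range (j - i - 1)).map (fun k => vgn n (i + 1 + k))).prod

/-- For strands `i < j` (0-based), the word `t_{ij} = v_i ⋯ v_{j-2} v_{j-1} v_{j-2} ⋯ v_i`
in the `v`'s representing the transposition of strands `i` and `j`. -/
def tw (n i j : ℕ) : VB n :=
  ((List.range (j - 1 - i)).map (fun k => vgn n (i + k))).prod *
    vgn n (j - 1) *
    ((List.range (j - 1 - i)).map (fun k => vgn n (j - 2 - k))).prod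

/-- The connecting string `μ_{ij}` for arbitrary distinct strands (0-based):
`μ_{ij}` as above for `i < j`, and `μ_{ji} = t_{ij} μ_{ij} t_{ij}` for `j < i`. -/
def muG (n i j : ℕ) : VB n :=
  if i < j then muUp n i j else tw n j i * muUp n j i * tw n j i
namespace VBAux

open VBDef

variable {n : ℕ}

lemma rel_eq_one {r : FreeGroup (VBGen n)} (hr : r ∈ VBDef.VBRels n) :
    (PresentedGroup.mk (VBDef.VBRels n) r) = 1 :=
  (QuotientGroup.eq_one_iff r).mpr (Subgroup.subset_normalClosure hr)

lemma mk_S (i : Fin (n-1)) : PresentedGroup.mk (VBDef.VBRels n) (S i) = σg i := rfl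
lemma mk_V (i : Fin (n-1)) : PresentedGroup.mk (VBDef.VBRels n) (V i) = vg i := rfl

lemma vg_sq (i : Fin (n-1)) : vg i * vg i = 1 := by
  have := rel_eq_one (r := V i * V i) (by
    unfold VBDef.VBRels; exact Or.inr (Or.inr (Or.inr (Or.inr (Or.inl ⟨i, rfl⟩)))))
  simpa [mk_V] using this

lemma vgn_sq (k : ℕ) : vgn n k * vgn n k = 1 := by
  unfold vgn; split
  · exact vg_sq _
  · simp

lemma vgn_inv (k : ℕ) : (vgn n k)⁻¹ = vgn n k := by
  rw [inv_eq_iff_mul_eq_one]; exact vgn_sq k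

lemma v_comm {k l : ℕ} (h : k + 2 ≤ l) : Commute (vgn n k) (vgn n l) := by
  unfold vgn
  split <;> split <;> try simp [Commute.one_right, Commute.one_left]
  rename_i hk hl
  have := rel_eq_one (r := V (n := n) ⟨k, hk⟩ * V ⟨l, hl⟩ * (V ⟨l, hl⟩ * V ⟨k, hk⟩)⁻¹) (by
    unfold VBDef.VBRels
    exact Or.inr (Or.inr (Or.inr (Or.inl ⟨⟨k, hk⟩, ⟨l, hl⟩, h, rfl⟩))))
  simp only [map_mul, map_inv, mk_V, mul_inv_eq_one] at this
  exact this

lemma sv_comm {k l : ℕ} (h : k + 2 ≤ l ∨ l + 2 ≤ k) : Commute (sgn n k) (vgn n l) := by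
  unfold sgn vgn
  split <;> split <;> try simp [Commute.one_right, Commute.one_left]
  rename_i hk hl
  have := rel_eq_one (r := S (n := n) ⟨k, hk⟩ * V ⟨l, hl⟩ * (V ⟨l, hl⟩ * S ⟨k, hk⟩)⁻¹) (by
    unfold VBDef.VBRels
    exact Or.inr (Or.inr (Or.inr (Or.inr (Or.inr (Or.inr ⟨⟨k, hk⟩, ⟨l, hl⟩, h, rfl⟩))))))
  simp only [map_mul, map_inv, mk_S, mk_V, mul_inv_eq_one] at this
  exact this

lemma v_braid {k : ℕ} (h : k + 1 < n - 1) :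
    vgn n k * vgn n (k+1) * vgn n k = vgn n (k+1) * vgn n k * vgn n (k+1) := by
  have hk : k < n - 1 := by omega
  have := rel_eq_one (r := V (n := n) ⟨k, hk⟩ * V ⟨k+1, h⟩ * V ⟨k, hk⟩ *
      (V ⟨k+1, h⟩ * V ⟨k, hk⟩ * V ⟨k+1, h⟩)⁻¹) (by
    unfold VBDef.VBRels
    exact Or.inr (Or.inr (Or.inl ⟨⟨k, hk⟩, ⟨k+1, h⟩, rfl, rfl⟩)))
  simp only [map_mul, map_inv, mk_V, mul_inv_eq_one] at this
  simpa [vgn, hk, h] using this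

lemma mix {k : ℕ} (h : k + 1 < n - 1) :
    vgn n k * sgn n (k+1) * vgn n k = vgn n (k+1) * sgn n k * vgn n (k+1) := by
  have hk : k < n - 1 := by omega
  have := rel_eq_one (r := V (n := n) ⟨k, hk⟩ * S ⟨k+1, h⟩ * V ⟨k, hk⟩ *
      (V ⟨k+1, h⟩ * S ⟨k, hk⟩ * V ⟨k+1, h⟩)⁻¹) (by
    unfold VBDef.VBRels
    exact Or.inr (Or.inr (Or.inr (Or.inr (Or.inr (Or.inl ⟨⟨k, hk⟩, ⟨k+1, h⟩, rfl, rfl⟩))))))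
  simp only [map_mul, map_inv, mk_V, mk_S, mul_inv_eq_one] at this
  simpa [vgn, sgn, hk, h] using this

end VBAux
namespace VBAux

variable {n : ℕ}

/-- descending word `v_{b-1} v_{b-2} ⋯ v_a`. -/
def Dv (n a b : ℕ) : VB n := ((List.range (b - a)).map (fun k => vgn n (b - 1 - k))).prod
/-- ascending word `v_a v_{a+1} ⋯ v_{b-1}`. -/
def Av (n a b : ℕ) : VB n := ((List.range (b - a)).map (fun k => vgn n (a + k))).prod

lemma Dv_nil {a b : ℕ} (h : b ≤ a) : Dv n a b = 1 := by
  unfold Dv; rw [Nat.sub_eq_zero_of_le h]; simp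

lemma Dv_top {a b : ℕ} (h : a < b) : Dv n a b = vgn n (b-1) * Dv n a (b-1) := by
  unfold Dv
  have h1 : b - a = (b - 1 - a) + 1 := by omega
  have h2 : (fun k => vgn n (b - 1 - (k+1))) = (fun k => vgn n (b - 1 - 1 - k)) := by
    funext k; congr 1; omega
  rw [h1, List.range_succ_eq_map]
  simp only [List.map_cons, List.prod_cons, List.map_map, Nat.sub_zero, Function.comp_def, h2]

lemma Dv_bot {a b : ℕ} (h : a < b) : Dv n a b = Dv n (a+1) b * vgn n a := by
  unfold Dv
  have h1 : b - a = (b - (a+1)) + 1 := by omega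
  rw [h1, List.range_succ]
  simp only [List.map_append, List.prod_append, List.map_cons, List.prod_cons, List.map_nil,
    List.prod_nil, mul_one]
  rw [show b - 1 - (b - (a+1)) = a from by omega]

lemma Av_nil {a b : ℕ} (h : b ≤ a) : Av n a b = 1 := by
  unfold Av; rw [Nat.sub_eq_zero_of_le h]; simp

lemma Av_bot {a b : ℕ} (h : a < b) : Av n a b = vgn n a * Av n (a+1) b := by
  unfold Av
  have h1 : b - a = (b - (a+1)) + 1 := by omega
  have h2 : (fun k => vgn n (a + (k+1))) = (fun k => vgn n (a + 1 + k)) := by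
    funext k; congr 1; omega
  rw [h1, List.range_succ_eq_map]
  simp only [List.map_cons, List.prod_cons, List.map_map, Nat.add_zero, Function.comp_def, h2]

lemma Av_top {a b : ℕ} (h : a < b) : Av n a b = Av n a (b-1) * vgn n (b-1) := by
  unfold Av
  have h1 : b - a = (b - 1 - a) + 1 := by omega
  rw [h1, List.range_succ]
  simp only [List.map_append, List.prod_append, List.map_cons, List.prod_cons, List.map_nil,
    List.prod_nil, mul_one]
  rw [show a + (b - 1 - a) = b - 1 from by omega]

lemma comm_v_Dv {l a b : ℕ} (h : l + 2 ≤ a ∨ b + 1 ≤ l) : Commute (vgn n l) (Dv n a b) := by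
  apply Commute.list_prod_right
  intro y hy
  simp only [List.mem_map, List.mem_range] at hy
  obtain ⟨k, hk, rfl⟩ := hy
  rcases h with h | h
  · exact v_comm (by omega)
  · exact (v_comm (k := b - 1 - k) (l := l) (by omega)).symm

lemma comm_v_Av {l a b : ℕ} (h : l + 2 ≤ a ∨ b + 1 ≤ l) : Commute (vgn n l) (Av n a b) := by
  apply Commute.list_prod_right
  intro y hy
  simp only [List.mem_map, List.mem_range] at hy
  obtain ⟨k, hk, rfl⟩ := hy
  rcases h with h | h
  · exact v_comm (by omega)
  · exact (v_comm (k := a + k) (l := l) (by omega)).symm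

/-- `v_{k-1} ⋅ (v_{b-1} ⋯ v_j) = (v_{b-1} ⋯ v_j) ⋅ v_k`. -/
lemma pass_Dv {j k b : ℕ} (hj : j + 1 ≤ k) (hb : k + 1 ≤ b) (hk : k < n - 1) :
    vgn n (k-1) * Dv n j b = Dv n j b * vgn n k := by
  induction b with
  | zero => omega
  | succ b ih =>
    rcases Nat.lt_or_ge (k+1) (b+1) with hlt | hge
    · rw [Dv_top (a := j) (b := b+1) (by omega)]
      rw [show b + 1 - 1 = b from rfl]
      rw [← mul_assoc, (v_comm (k := k-1) (l := b) (by omega)).eq, mul_assoc,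
        ih (by omega), ← mul_assoc, mul_assoc]
    · have hbk : b = k := by omega
      subst hbk
      rw [Dv_top (a := j) (b := b+1) (by omega)]
      rw [show b + 1 - 1 = b from rfl]
      rw [Dv_top (a := j) (b := b) (by omega)]
      have hbr := v_braid (k := b - 1) (n := n) (by omega)
      rw [show b - 1 + 1 = b from by omega] at hbr
      have hcomm : Commute (vgn n b) (Dv n j (b-1)) := comm_v_Dv (by omega)
      calc vgn n (b-1) * (vgn n b * (vgn n (b-1) * Dv n j (b-1)))
          = (vgn n (b-1) * vgn n b * vgn n (b-1)) * Dv n j (b-1) := by group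
        _ = (vgn n b * vgn n (b-1) * vgn n b) * Dv n j (b-1) := by rw [hbr]
        _ = vgn n b * vgn n (b-1) * (vgn n b * Dv n j (b-1)) := by group
        _ = vgn n b * vgn n (b-1) * (Dv n j (b-1) * vgn n b) := by rw [hcomm.eq]
        _ = vgn n b * (vgn n (b-1) * Dv n j (b-1)) * vgn n b := by group

lemma muUp_eq (i j : ℕ) : muUp n i j = Dv n (i+1) j * (sgn n i * vgn n i) * Av n (i+1) j := by
  unfold muUp Dv Av
  rw [show j - (i+1) = j - i - 1 from by omega]

lemma tw_eq (i j : ℕ) : tw n i j = Av n i (j-1) * vgn n (j-1) * Dv n i (j-1) := by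
  unfold tw Av Dv
  have h3 : j - 1 - 1 = j - 2 := by omega
  have h2 : (fun k => vgn n (j - 1 - 1 - k)) = (fun k => vgn n (j - 2 - k)) := by
    rw [h3]
  rw [h2]

lemma muUp_base (i : ℕ) : muUp n i (i+1) = sgn n i * vgn n i := by
  rw [muUp_eq, Dv_nil (by omega), Av_nil (by omega), one_mul, mul_one]

lemma muUp_top {i j : ℕ} (h : i + 1 < j) :
    muUp n i j = vgn n (j-1) * muUp n i (j-1) * vgn n (j-1) := by
  rw [muUp_eq, muUp_eq, Dv_top (a := i+1) (b := j) (by omega), Av_top (a := i+1) (b := j) (by omega)]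
  group

lemma tw_base (i : ℕ) : tw n i (i+1) = vgn n i := by
  rw [tw_eq]
  rw [show i + 1 - 1 = i from rfl, Av_nil (by omega), Dv_nil (by omega), one_mul, mul_one]

lemma tw_left {i j : ℕ} (h : i + 1 < j) :
    tw n i j = vgn n i * tw n (i+1) j * vgn n i := by
  rw [tw_eq, tw_eq, Av_bot (a := i) (b := j-1) (by omega), Dv_bot (a := i) (b := j-1) (by omega)]
  group

end VBAux
namespace VBAux

variable {n : ℕ}

section GroupAux
variable {G : Type*} [Group G]

lemma conj_swap {u w m : G} (h : Commute u w) :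
    u * (w * m * w) * u = w * (u * m * u) * w := by
  calc u * (w * m * w) * u = (u*w) * m * (w*u) := by group
    _ = (w*u) * m * (u*w) := by rw [h.eq]
    _ = w * (u * m * u) * w := by group

lemma aux_mix2 {a b s t : G} (hmix : a * t * a = b * s * b) (hbr : a * b * a = b * a * b)
    (ha : a * a = 1) : a * (t * b) * a = b * (s * a) * b := by
  calc a * (t * b) * a
      = a * t * 1 * (b * a) := by group
    _ = a * t * (a * a) * (b * a) := by rw [ha]
    _ = (a*t*a) * (a*(b*a)) := by group
    _ = (b*s*b) * (a*(b*a)) := by rw [hmix]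
    _ = b * s * (b*a*b) * a := by group
    _ = b * s * (a*b*a) * a := by rw [hbr]
    _ = b * s * (a * b) * (a * a) := by group
    _ = b * s * (a * b) * 1 := by rw [ha]
    _ = b * (s * a) * b := by group

lemma aux_mix4 {a b s t : G} (hmix : a * t * a = b * s * b) (hbr : a * b * a = b * a * b)
    (ha : a * a = 1) : a * (b * (s * a) * b) * a = t * b := by
  calc a * (b * (s * a) * b) * a
      = a * b * s * (a*b*a) := by group
    _ = a * b * s * (b*a*b) := by rw [hbr]
    _ = a * (b*s*b) * (a*b) := by group
    _ = a * (a*t*a) * (a*b) := by rw [← hmix]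
    _ = (a*a) * t * (a*a) * b := by group
    _ = 1 * t * 1 * b := by rw [ha]
    _ = t * b := by group

lemma aux_sand {a b m : G} (hbr : a * b * a = b * a * b) (hb : b * b = 1)
    (hc : Commute b m) : a * (b * (a * m * a) * b) * a = b * (a * m * a) * b := by
  calc a * (b * (a * m * a) * b) * a
      = (a*b*a) * m * (a*b*a) := by group
    _ = (b*a*b) * m * (b*a*b) := by rw [hbr]
    _ = b * a * (b * m) * b * a * b := by group
    _ = b * a * (m * b) * b * a * b := by rw [hc.eq]
    _ = b * a * m * (b*b) * a * b := by group
    _ = b * a * m * 1 * a * b := by rw [hb]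
    _ = b * (a * m * a) * b := by group

end GroupAux

lemma C_up {l i j : ℕ} (hij : i < j) (h : l + 2 ≤ i ∨ j + 1 ≤ l) :
    Commute (vgn n l) (muUp n i j) := by
  induction j with
  | zero => omega
  | succ j ih =>
    rcases Nat.lt_or_ge i j with hlt | hge
    · rw [muUp_top (i := i) (j := j+1) (by omega), show j + 1 - 1 = j from rfl]
      have h1 : Commute (vgn n l) (vgn n j) := by
        rcases h with h | h
        · exact v_comm (by omega)
        · exact (v_comm (by omega)).symm
      exact (h1.mul_right (ih hlt (by omega))).mul_right h1
    · have : j = i := by omega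
      subst this
      rw [muUp_base]
      have h1 : Commute (vgn n l) (sgn n j) := by
        rcases h with h | h
        · exact (sv_comm (Or.inr (by omega))).symm
        · exact (sv_comm (Or.inl (by omega))).symm
      have h2 : Commute (vgn n l) (vgn n j) := by
        rcases h with h | h
        · exact v_comm (by omega)
        · exact (v_comm (by omega)).symm
      exact h1.mul_right h2

lemma C_tw {l i j : ℕ} (hij : i < j) (h : l + 2 ≤ i ∨ j + 1 ≤ l) :
    Commute (vgn n l) (tw n i j) := by
  have main : ∀ d i, i < j → (l + 2 ≤ i ∨ j + 1 ≤ l) → j - i - 1 ≤ d →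
      Commute (vgn n l) (tw n i j) := by
    intro d
    induction d with
    | zero =>
      intro i h1 h2 h3
      have : j = i + 1 := by omega
      subst this
      rw [tw_base]
      rcases h2 with h2 | h2
      · exact v_comm (by omega)
      · exact (v_comm (by omega)).symm
    | succ d ihd =>
      intro i h1 h2 h3
      rcases Nat.lt_or_ge (i+1) j with hlt | hge
      · rw [tw_left (by omega)]
        have hx1 : Commute (vgn n l) (vgn n i) := by
          rcases h2 with h2 | h2
          · exact v_comm (by omega)
          · exact (v_comm (by omega)).symm
        exact (hx1.mul_right (ihd (i+1) (by omega) (by omega) (by omega))).mul_right hx1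
      · exact ihd i h1 h2 (by omega)
  exact main (j - i - 1) i hij h le_rfl

/-- conjugation by `v_{i-1}`: `μ_{i,j} ↦ μ_{i-1,j}`. -/
lemma M2 {i j : ℕ} (h1 : 1 ≤ i) (h2 : i < j) (h3 : j ≤ n - 1) :
    vgn n (i-1) * muUp n i j * vgn n (i-1) = muUp n (i-1) j := by
  induction j with
  | zero => omega
  | succ j ih =>
    rcases Nat.lt_or_ge i j with hlt | hge
    · rw [muUp_top (i := i) (j := j+1) (by omega), show j + 1 - 1 = j from rfl]
      have hc : Commute (vgn n (i-1)) (vgn n j) := v_comm (by omega)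
      rw [conj_swap hc, ih hlt (by omega),
        muUp_top (i := i-1) (j := j+1) (by omega), show j + 1 - 1 = j from rfl]
    · have : j = i := by omega
      subst this
      rw [muUp_base]
      have hmix := mix (n := n) (k := j-1) (by omega)
      have hbr := v_braid (n := n) (k := j-1) (by omega)
      rw [show j - 1 + 1 = j from by omega] at hmix hbr
      have := aux_mix2 (a := vgn n (j-1)) (b := vgn n j) (s := sgn n (j-1)) (t := sgn n j)
        hmix hbr (vgn_sq _)
      rw [this, muUp_eq (i := j-1) (j := j+1),
        show j - 1 + 1 = j from by omega,
        Dv_top (a := j) (b := j+1) (by omega), show j + 1 - 1 = j from rfl,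
        Dv_nil (a := j) (b := j) (by omega),
        Av_top (a := j) (b := j+1) (by omega), show j + 1 - 1 = j from rfl,
        Av_nil (a := j) (b := j) (by omega)]
      group

/-- conjugation by `v_i`: `μ_{i,j} ↦ μ_{i+1,j}` for `j > i+1`. -/
lemma M4 {i j : ℕ} (h2 : i + 1 < j) (h3 : j ≤ n - 1) :
    vgn n i * muUp n i j * vgn n i = muUp n (i+1) j := by
  induction j with
  | zero => omega
  | succ j ih =>
    rcases Nat.lt_or_ge (i+1) j with hlt | hge
    · rw [muUp_top (i := i) (j := j+1) (by omega), show j + 1 - 1 = j from rfl]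
      have hc : Commute (vgn n i) (vgn n j) := v_comm (by omega)
      rw [conj_swap hc, ih hlt (by omega),
        muUp_top (i := i+1) (j := j+1) (by omega), show j + 1 - 1 = j from rfl]
    · have : j = i + 1 := by omega
      subst this
      rw [muUp_top (i := i) (j := i+2) (by omega), show i + 2 - 1 = i + 1 from rfl,
        muUp_base, muUp_base]
      have hmix := mix (n := n) (k := i) (by omega)
      have hbr := v_braid (n := n) (k := i) (by omega)
      exact aux_mix4 (a := vgn n i) (b := vgn n (i+1)) (s := sgn n i) (t := sgn n (i+1))
        hmix hbr (vgn_sq _)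

/-- `v_k` commutes with `μ_{i,j}` for `i < k < k+1 < j`. -/
lemma M5 {i j k : ℕ} (h1 : i < k) (h2 : k + 1 < j) (h3 : j ≤ n - 1) :
    Commute (vgn n k) (muUp n i j) := by
  induction j with
  | zero => omega
  | succ j ih =>
    rcases Nat.lt_or_ge (k+1) j with hlt | hge
    · rw [muUp_top (i := i) (j := j+1) (by omega), show j + 1 - 1 = j from rfl]
      have hc : Commute (vgn n k) (vgn n j) := v_comm (by omega)
      exact (hc.mul_right (ih hlt (by omega))).mul_right hc
    · have : j = k + 1 := by omega
      subst this
      unfold Commute SemiconjBy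
      have e1 : vgn n k * muUp n i (k+2) * vgn n k = muUp n i (k+2) := by
        rw [muUp_top (i := i) (j := k+2) (by omega), show k + 2 - 1 = k + 1 from rfl,
          muUp_top (i := i) (j := k+1) (by omega), show k + 1 - 1 = k from rfl]
        exact aux_sand (v_braid (by omega)) (vgn_sq _) (C_up (by omega) (Or.inr (by omega)))
      calc vgn n k * muUp n i (k+2) = vgn n k * muUp n i (k+2) * (vgn n k * vgn n k) := by
            rw [vgn_sq]; group
        _ = (vgn n k * muUp n i (k+2) * vgn n k) * vgn n k := by group
        _ = muUp n i (k+2) * vgn n k := by rw [e1]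

/-- conjugation by `v_{j-1}`: `μ_{i,j} ↦ μ_{i,j-1}`. -/
lemma M6 {i j : ℕ} (h1 : i + 1 < j) :
    vgn n (j-1) * muUp n i j * vgn n (j-1) = muUp n i (j-1) := by
  rw [muUp_top h1]
  calc vgn n (j-1) * (vgn n (j-1) * muUp n i (j-1) * vgn n (j-1)) * vgn n (j-1)
      = (vgn n (j-1) * vgn n (j-1)) * muUp n i (j-1) * (vgn n (j-1) * vgn n (j-1)) := by group
    _ = 1 * muUp n i (j-1) * 1 := by rw [vgn_sq]
    _ = muUp n i (j-1) := by group

/-- conjugation by `v_j`: `μ_{i,j} ↦ μ_{i,j+1}`. -/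
lemma M7 {i j : ℕ} (h1 : i < j) :
    vgn n j * muUp n i j * vgn n j = muUp n (i) (j+1) := by
  rw [muUp_top (i := i) (j := j+1) (by omega), show j + 1 - 1 = j from rfl]

/-- conjugation by `v_{i-1}`: `t_{i,j} ↦ t_{i-1,j}`. -/
lemma T2 {i j : ℕ} (h1 : 1 ≤ i) (h2 : i < j) :
    vgn n (i-1) * tw n i j * vgn n (i-1) = tw n (i-1) j := by
  rw [tw_left (i := i-1) (j := j) (by omega), show i - 1 + 1 = i from by omega]

/-- conjugation by `v_i`: `t_{i,j} ↦ t_{i+1,j}` for `j > i+1`. -/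
lemma T4 {i j : ℕ} (h2 : i + 1 < j) :
    vgn n i * tw n i j * vgn n i = tw n (i+1) j := by
  rw [tw_left h2]
  calc vgn n i * (vgn n i * tw n (i+1) j * vgn n i) * vgn n i
      = (vgn n i * vgn n i) * tw n (i+1) j * (vgn n i * vgn n i) := by group
    _ = 1 * tw n (i+1) j * 1 := by rw [vgn_sq]
    _ = tw n (i+1) j := by group

/-- `v_k` commutes with `t_{i,j}` for `i < k < k+1 < j`. -/
lemma T5 {i j k : ℕ} (h1 : i < k) (h2 : k + 1 < j) (h3 : j ≤ n - 1) :
    Commute (vgn n k) (tw n i j) := by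
  have main : ∀ d i, i < k → k - i - 1 ≤ d → Commute (vgn n k) (tw n i j) := by
    intro d
    induction d with
    | zero =>
      intro i h1 hd
      have : i = k - 1 := by omega
      subst this
      unfold Commute SemiconjBy
      have e1 : vgn n k * tw n (k-1) j * vgn n k = tw n (k-1) j := by
        rw [tw_left (i := k-1) (j := j) (by omega), show k - 1 + 1 = k from by omega,
          tw_left (i := k) (j := j) (by omega)]
        have hbr := v_braid (n := n) (k := k-1) (by omega)
        rw [show k - 1 + 1 = k from by omega] at hbr
        exact aux_sand hbr.symm (vgn_sq _) (C_tw (by omega) (Or.inl (by omega)))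
      calc vgn n k * tw n (k-1) j = vgn n k * tw n (k-1) j * (vgn n k * vgn n k) := by
            rw [vgn_sq]; group
        _ = (vgn n k * tw n (k-1) j * vgn n k) * vgn n k := by group
        _ = tw n (k-1) j * vgn n k := by rw [e1]
    | succ d ihd =>
      intro i h1 hd
      rcases Nat.lt_or_ge (i+1) k with hlt | hge
      · rw [tw_left (by omega)]
        have hc : Commute (vgn n k) (vgn n i) := (v_comm (by omega)).symm
        exact (hc.mul_right (ihd (i+1) (by omega) (by omega))).mul_right hc
      · exact ihd i h1 (by omega)
  exact main (k - i - 1) i h1 le_rfl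

/-- conjugation by `v_{j-1}`: `t_{i,j} ↦ t_{i,j-1}`. -/
lemma T6 {i j : ℕ} (h1 : i + 1 < j) (h3 : j ≤ n - 1) :
    vgn n (j-1) * tw n i j * vgn n (j-1) = tw n i (j-1) := by
  have main : ∀ d i, i + 1 < j → j - i - 2 ≤ d →
      vgn n (j-1) * tw n i j * vgn n (j-1) = tw n i (j-1) := by
    intro d
    induction d with
    | zero =>
      intro i h1 hd
      have : i = j - 2 := by omega
      subst this
      rw [tw_left (i := j-2) (j := j) (by omega),
        show tw n (j-2+1) j = tw n (j-1) ((j-1)+1) from by rw [show j-2+1 = j-1 from by omega,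
          show (j-1)+1 = j from by omega],
        tw_base, show tw n (j-2) (j-1) = tw n (j-2) ((j-2)+1) from by rw [show (j-2)+1 = j-1 from by omega],
        tw_base]
      have hbr := v_braid (n := n) (k := j-2) (by omega)
      rw [show j - 2 + 1 = j - 1 from by omega] at hbr
      calc vgn n (j-1) * (vgn n (j-2) * vgn n (j-1) * vgn n (j-2)) * vgn n (j-1)
          = (vgn n (j-1) * vgn n (j-2) * vgn n (j-1)) * (vgn n (j-2) * vgn n (j-1)) := by group
        _ = (vgn n (j-2) * vgn n (j-1) * vgn n (j-2)) * (vgn n (j-2) * vgn n (j-1)) := by rw [hbr]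
        _ = vgn n (j-2) * vgn n (j-1) * (vgn n (j-2) * vgn n (j-2)) * vgn n (j-1) := by group
        _ = vgn n (j-2) * vgn n (j-1) * 1 * vgn n (j-1) := by rw [vgn_sq]
        _ = vgn n (j-2) * (vgn n (j-1) * vgn n (j-1)) := by group
        _ = vgn n (j-2) * 1 := by rw [vgn_sq]
        _ = vgn n (j-2) := by group
    | succ d ihd =>
      intro i h1 hd
      rcases Nat.lt_or_ge (i+2) j with hlt | hge
      · rw [tw_left (i := i) (j := j) (by omega)]
        have hc : Commute (vgn n (j-1)) (vgn n i) := (v_comm (by omega)).symm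
        rw [conj_swap hc, ihd (i+1) (by omega) (by omega),
          tw_left (i := i) (j := j-1) (by omega)]
      · exact ihd i h1 (by omega)
  exact main (j - i - 2) i h1 le_rfl

/-- conjugation by `v_j`: `t_{i,j} ↦ t_{i,j+1}`. -/
lemma T7 {i j : ℕ} (h1 : i < j) (h3 : j < n - 1) :
    vgn n j * tw n i j * vgn n j = tw n i (j+1) := by
  have main : ∀ d i, i < j → j - i - 1 ≤ d →
      vgn n j * tw n i j * vgn n j = tw n i (j+1) := by
    intro d
    induction d with
    | zero =>
      intro i h1 hd
      have : i = j - 1 := by omega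
      subst this
      rw [show tw n (j-1) j = tw n (j-1) ((j-1)+1) from by rw [show (j-1)+1 = j from by omega],
        tw_base, tw_left (i := j-1) (j := j+1) (by omega), show j - 1 + 1 = j from by omega,
        tw_base]
      have hbr := v_braid (n := n) (k := j-1) (by omega)
      rw [show j - 1 + 1 = j from by omega] at hbr
      exact hbr.symm
    | succ d ihd =>
      intro i h1 hd
      rcases Nat.lt_or_ge (i+1) j with hlt | hge
      · rw [tw_left (i := i) (j := j) (by omega)]
        have hc : Commute (vgn n j) (vgn n i) := (v_comm (by omega)).symm
        rw [conj_swap hc, ihd (i+1) (by omega) (by omega),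
          tw_left (i := i) (j := j+1) (by omega)]
      · exact ihd i h1 (by omega)
  exact main (j - i - 1) i h1 le_rfl

end VBAux
namespace VBAux

variable {n : ℕ}

/-- the transposition `(k, k+1)` acting on `ℕ`. -/
def swf (k x : ℕ) : ℕ := if x = k then k+1 else if x = k+1 then k else x

lemma swf_self {k x : ℕ} (h1 : x ≠ k) (h2 : x ≠ k+1) : swf k x = x := by
  unfold swf; split_ifs <;> omega

lemma swf_k {k : ℕ} : swf k k = k+1 := by unfold swf; split_ifs <;> omega

lemma swf_k1 {k : ℕ} : swf k (k+1) = k := by unfold swf; split_ifs <;> omega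

lemma swf_of_eq {k x : ℕ} (h : x = k) : swf k x = k + 1 := by
  unfold swf; split_ifs <;> omega

lemma swf_of_eq1 {k x : ℕ} (h : x = k + 1) : swf k x = k := by
  unfold swf; split_ifs <;> omega

lemma swf_inj {k x y : ℕ} (h : swf k x = swf k y) : x = y := by
  unfold swf at h; split_ifs at h <;> omega

lemma swf_lt {k x : ℕ} (h : x ≤ n - 1) (hk : k < n - 1) : swf k x ≤ n - 1 := by
  unfold swf; split_ifs <;> omega

lemma comm_conj {a m : VB n} (h : Commute a m) (ha : a * a = 1) : a * m * a = m := by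
  calc a * m * a = (a * m) * a := by group
    _ = (m * a) * a := by rw [h.eq]
    _ = m * (a * a) := by group
    _ = m * 1 := by rw [ha]
    _ = m := by group

lemma muG_lt {i j : ℕ} (h : i < j) : muG n i j = muUp n i j := if_pos h

lemma muG_ge {i j : ℕ} (h : ¬ i < j) : muG n i j = tw n j i * muUp n j i * tw n j i := if_neg h

lemma A_up {i j k : ℕ} (hij : i < j) (hj : j ≤ n - 1) (hk : k < n - 1) :
    vgn n k * muUp n i j * vgn n k = muG n (swf k i) (swf k j) := by
  by_cases h1 : k + 2 ≤ i
  · rw [swf_self (k := k) (x := i) (by omega) (by omega),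
      swf_self (k := k) (x := j) (by omega) (by omega), muG_lt hij]
    exact comm_conj (C_up hij (Or.inl h1)) (vgn_sq _)
  by_cases h2 : k + 1 = i
  · rw [swf_of_eq1 (k := k) (x := i) (by omega),
      swf_self (k := k) (x := j) (by omega) (by omega), muG_lt (by omega)]
    have := M2 (n := n) (i := i) (j := j) (by omega) hij hj
    rw [show i - 1 = k from by omega] at this
    rw [this]
  by_cases h3 : k = i
  · subst h3
    by_cases h4 : j = k + 1
    · subst h4
      rw [swf_of_eq (k := k) (x := k) rfl, swf_of_eq1 (k := k) (x := k+1) rfl,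
        muG_ge (by omega), tw_base]
    · rw [swf_of_eq (k := k) (x := k) rfl,
        swf_self (k := k) (x := j) (by omega) (by omega), muG_lt (by omega)]
      exact M4 (by omega) hj
  by_cases h5 : k + 1 < j
  · have hik : i < k := by omega
    rw [swf_self (k := k) (x := i) (by omega) (by omega),
      swf_self (k := k) (x := j) (by omega) (by omega), muG_lt hij]
    exact comm_conj (M5 hik h5 hj) (vgn_sq _)
  by_cases h6 : k + 1 = j
  · rw [swf_self (k := k) (x := i) (by omega) (by omega),
      swf_of_eq1 (k := k) (x := j) (by omega), muG_lt (by omega)]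
    have := M6 (n := n) (i := i) (j := j) (by omega)
    rw [show j - 1 = k from by omega] at this
    rw [this]
  by_cases h7 : k = j
  · subst h7
    rw [swf_self (k := k) (x := i) (by omega) (by omega),
      swf_of_eq (k := k) (x := k) rfl, muG_lt (by omega)]
    exact M7 hij
  · have hkj : j + 1 ≤ k := by omega
    rw [swf_self (k := k) (x := i) (by omega) (by omega),
      swf_self (k := k) (x := j) (by omega) (by omega), muG_lt hij]
    exact comm_conj (C_up hij (Or.inr hkj)) (vgn_sq _)

lemma A_tw {i j k : ℕ} (hij : i < j) (hj : j ≤ n - 1) (hk : k < n - 1) :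
    vgn n k * tw n i j * vgn n k =
      tw n (min (swf k i) (swf k j)) (max (swf k i) (swf k j)) := by
  by_cases h1 : k + 2 ≤ i
  · rw [swf_self (k := k) (x := i) (by omega) (by omega),
      swf_self (k := k) (x := j) (by omega) (by omega),
      min_eq_left (by omega), max_eq_right (by omega)]
    exact comm_conj (C_tw hij (Or.inl h1)) (vgn_sq _)
  by_cases h2 : k + 1 = i
  · rw [swf_of_eq1 (k := k) (x := i) (by omega),
      swf_self (k := k) (x := j) (by omega) (by omega),
      min_eq_left (by omega), max_eq_right (by omega)]
    have := T2 (n := n) (i := i) (j := j) (by omega) hij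
    rw [show i - 1 = k from by omega] at this
    rw [this]
  by_cases h3 : k = i
  · subst h3
    by_cases h4 : j = k + 1
    · subst h4
      rw [swf_of_eq (k := k) (x := k) rfl, swf_of_eq1 (k := k) (x := k+1) rfl,
        min_eq_right (by omega), max_eq_left (by omega), tw_base]
      calc vgn n k * vgn n k * vgn n k = 1 * vgn n k := by rw [vgn_sq]
        _ = vgn n k := by group
    · rw [swf_of_eq (k := k) (x := k) rfl,
        swf_self (k := k) (x := j) (by omega) (by omega),
        min_eq_left (by omega), max_eq_right (by omega)]
      exact T4 (by omega)
  by_cases h5 : k + 1 < j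
  · have hik : i < k := by omega
    rw [swf_self (k := k) (x := i) (by omega) (by omega),
      swf_self (k := k) (x := j) (by omega) (by omega),
      min_eq_left (by omega), max_eq_right (by omega)]
    exact comm_conj (T5 hik h5 hj) (vgn_sq _)
  by_cases h6 : k + 1 = j
  · rw [swf_self (k := k) (x := i) (by omega) (by omega),
      swf_of_eq1 (k := k) (x := j) (by omega),
      min_eq_left (by omega), max_eq_right (by omega)]
    have := T6 (n := n) (i := i) (j := j) (by omega) hj
    rw [show j - 1 = k from by omega] at this
    rw [this]
  by_cases h7 : k = j
  · subst h7
    rw [swf_self (k := k) (x := i) (by omega) (by omega),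
      swf_of_eq (k := k) (x := k) rfl,
      min_eq_left (by omega), max_eq_right (by omega)]
    exact T7 hij hk
  · have hkj : j + 1 ≤ k := by omega
    rw [swf_self (k := k) (x := i) (by omega) (by omega),
      swf_self (k := k) (x := j) (by omega) (by omega),
      min_eq_left (by omega), max_eq_right (by omega)]
    exact comm_conj (C_tw hij (Or.inr hkj)) (vgn_sq _)

lemma sq_conj_three {v t m : VB n} (hv : v * v = 1) :
    v * (t * m * t) * v = (v * t * v) * (v * m * v) * (v * t * v) := by
  calc v * (t * m * t) * v = v * t * 1 * m * 1 * t * v := by group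
    _ = v * t * (v * v) * m * (v * v) * t * v := by rw [hv]
    _ = (v * t * v) * (v * m * v) * (v * t * v) := by group

lemma A_muG {i j k : ℕ} (hij : i ≠ j) (hi : i ≤ n - 1) (hj : j ≤ n - 1) (hk : k < n - 1) :
    vgn n k * muG n i j * vgn n k = muG n (swf k i) (swf k j) := by
  rcases Nat.lt_or_ge i j with hlt | hge
  · rw [muG_lt hlt]; exact A_up hlt hj hk
  · have hji : j < i := by omega
    rw [muG_ge (by omega), sq_conj_three (vgn_sq _), A_tw hji hi hk, A_up hji hi hk]
    rcases Nat.lt_trichotomy (swf k j) (swf k i) with h | h | h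
    · rw [min_eq_left (by omega), max_eq_right (by omega), muG_lt h, muG_ge (by omega)]
    · exact absurd (swf_inj h) (by omega)
    · -- flip case : j = k, i = k + 1
      have hjk : j = k ∧ i = k + 1 := by
        constructor <;> (unfold swf at h; split_ifs at h <;> omega)
      obtain ⟨hj', hi'⟩ := hjk
      subst hj'; subst hi'
      rw [swf_of_eq (k := j) (x := j) rfl, swf_of_eq1 (k := j) (x := j+1) rfl,
        min_eq_right (by omega), max_eq_left (by omega),
        muG_ge (n := n) (i := j+1) (j := j) (by omega), tw_base, muG_lt (by omega)]
      calc vgn n j * (vgn n j * muUp n j (j+1) * vgn n j) * vgn n j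
          = (vgn n j * vgn n j) * muUp n j (j+1) * (vgn n j * vgn n j) := by group
        _ = 1 * muUp n j (j+1) * 1 := by rw [vgn_sq]
        _ = muUp n j (j+1) := by group

end VBAux
namespace VBAux

variable {n : ℕ}

/-- transposition `(k, k+1)` as a permutation of `Fin n` (junk `1` out of range). -/
def sperm (n k : ℕ) : Equiv.Perm (Fin n) :=
  if h : k < n - 1 then Equiv.swap ⟨k, by omega⟩ ⟨k+1, by omega⟩ else 1

lemma sperm_sq (k : ℕ) : sperm n k * sperm n k = 1 := by
  unfold sperm; split
  · exact Equiv.swap_mul_self _ _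
  · simp

lemma sperm_inv (k : ℕ) : (sperm n k)⁻¹ = sperm n k := by
  rw [inv_eq_iff_mul_eq_one]; exact sperm_sq k

lemma sperm_other {k : ℕ} {x : Fin n} (h1 : x.1 ≠ k) (h2 : x.1 ≠ k+1) : sperm n k x = x := by
  unfold sperm; split
  · apply Equiv.swap_apply_of_ne_of_ne
    · exact fun hx => h1 (by rw [hx])
    · exact fun hx => h2 (by rw [hx])
  · rfl

lemma sperm_left {k : ℕ} (h : k < n - 1) {x : Fin n} (hx : x.1 = k) :
    (sperm n k x).1 = k+1 := by
  unfold sperm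
  rw [dif_pos h]
  have hxx : x = ⟨k, by omega⟩ := Fin.ext hx
  rw [hxx, Equiv.swap_apply_left]

lemma sperm_right {k : ℕ} (h : k < n - 1) {x : Fin n} (hx : x.1 = k+1) :
    (sperm n k x).1 = k := by
  unfold sperm
  rw [dif_pos h]
  have hxx : x = ⟨k+1, by omega⟩ := Fin.ext hx
  rw [hxx, Equiv.swap_apply_right]

/-- the permutation `s_{b-1} s_{b-2} ⋯ s_j` (product of swaps). -/
def dperm (n j b : ℕ) : Equiv.Perm (Fin n) :=
  ((List.range (b - j)).map (fun k => sperm n (b - 1 - k))).prod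

lemma dperm_nil {j b : ℕ} (h : b ≤ j) : dperm n j b = 1 := by
  unfold dperm; rw [Nat.sub_eq_zero_of_le h]; simp

lemma dperm_bot {j b : ℕ} (h : j < b) : dperm n j b = dperm n (j+1) b * sperm n j := by
  unfold dperm
  have h1 : b - j = (b - (j+1)) + 1 := by omega
  rw [h1, List.range_succ]
  simp only [List.map_append, List.prod_append, List.map_cons, List.prod_cons, List.map_nil,
    List.prod_nil, mul_one]
  rw [show b - 1 - (b - (j+1)) = j from by omega]

lemma dval_lo {j b : ℕ} {x : Fin n} (h : x.1 < j ∨ b < x.1) : dperm n j b x = x := by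
  have main : ∀ d j, b - j ≤ d → (x.1 < j ∨ b < x.1) → dperm n j b x = x := by
    intro d
    induction d with
    | zero => intro j hd _; rw [dperm_nil (by omega)]; rfl
    | succ d ihd =>
      intro j hd hx
      rcases Nat.lt_or_ge j b with hjb | hjb
      · rw [dperm_bot hjb, Equiv.Perm.mul_apply]
        rw [sperm_other (by omega) (by omega)]
        exact ihd (j+1) (by omega) (by omega)
      · rw [dperm_nil (by omega)]; rfl
  exact main (b - j) j le_rfl h

lemma dval_j {j b : ℕ} {x : Fin n} (hjb : j ≤ b) (hb : b < n) (hx : x.1 = j) :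
    (dperm n j b x).1 = b := by
  have main : ∀ d j, b - j ≤ d → j ≤ b → ∀ x : Fin n, x.1 = j → (dperm n j b x).1 = b := by
    intro d
    induction d with
    | zero =>
      intro j hd hj x hx
      have : j = b := by omega
      rw [dperm_nil (by omega)]
      simpa [hx] using this
    | succ d ihd =>
      intro j hd hj x hx
      rcases Nat.lt_or_ge j b with hjb' | hjb'
      · rw [dperm_bot hjb', Equiv.Perm.mul_apply]
        exact ihd (j+1) (by omega) (by omega) _ (sperm_left (by omega) hx)
      · have : j = b := by omega
        rw [dperm_nil (by omega)]
        simpa [hx] using this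
  exact main (b - j) j le_rfl hjb x hx

lemma dval_mid {j b : ℕ} {x : Fin n} (h1 : j < x.1) (h2 : x.1 ≤ b) :
    (dperm n j b x).1 = x.1 - 1 := by
  have main : ∀ d j, b - j ≤ d → j < x.1 → (dperm n j b x).1 = x.1 - 1 := by
    intro d
    induction d with
    | zero => intro j hd hj; omega
    | succ d ihd =>
      intro j hd hj
      have hjb : j < b := by omega
      rw [dperm_bot hjb, Equiv.Perm.mul_apply]
      rcases Nat.lt_or_ge (j+1) x.1 with hx | hx
      · rw [sperm_other (by omega) (by omega)]
        exact ihd (j+1) (by omega) (by omega)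
      · have hx1 : x.1 = j + 1 := by omega
        have hv : (sperm n j x).1 = j := sperm_right (by omega) hx1
        rw [dval_lo (Or.inl (by omega))]
        omega
  exact main (b - j) j le_rfl h1

lemma Dv_mul_Av (a b : ℕ) : Dv n a b * Av n a b = 1 := by
  have main : ∀ d a, b - a ≤ d → Dv n a b * Av n a b = 1 := by
    intro d
    induction d with
    | zero =>
      intro a hd
      rcases Nat.lt_or_ge a b with h | h
      · omega
      · rw [Dv_nil h, Av_nil h]; group
    | succ d ihd =>
      intro a hd
      rcases Nat.lt_or_ge a b with h | h
      · rw [Dv_bot h, Av_bot h]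
        calc Dv n (a+1) b * vgn n a * (vgn n a * Av n (a+1) b)
            = Dv n (a+1) b * (vgn n a * vgn n a) * Av n (a+1) b := by group
          _ = Dv n (a+1) b * 1 * Av n (a+1) b := by rw [vgn_sq]
          _ = Dv n (a+1) b * Av n (a+1) b := by group
          _ = 1 := ihd (a+1) (by omega)
      · rw [Dv_nil h, Av_nil h]; group
  exact main (b - a) a le_rfl

lemma Av_mul_Dv (a b : ℕ) : Av n a b * Dv n a b = 1 := by
  have h := Dv_mul_Av (n := n) a b
  rw [mul_eq_one_iff_inv_eq] at h ⊢
  rw [← h]; group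

lemma tw_sq (i j : ℕ) : tw n i j * tw n i j = 1 := by
  rw [tw_eq]
  calc Av n i (j-1) * vgn n (j-1) * Dv n i (j-1) * (Av n i (j-1) * vgn n (j-1) * Dv n i (j-1))
      = Av n i (j-1) * vgn n (j-1) * (Dv n i (j-1) * Av n i (j-1)) * vgn n (j-1) * Dv n i (j-1) := by
        group
    _ = Av n i (j-1) * vgn n (j-1) * 1 * vgn n (j-1) * Dv n i (j-1) := by rw [Dv_mul_Av]
    _ = Av n i (j-1) * (vgn n (j-1) * vgn n (j-1)) * Dv n i (j-1) := by group
    _ = Av n i (j-1) * 1 * Dv n i (j-1) := by rw [vgn_sq]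
    _ = Av n i (j-1) * Dv n i (j-1) := by group
    _ = 1 := Av_mul_Dv _ _

section Pi

variable (π : VB n →* Equiv.Perm (Fin n))
variable (hπ : ∀ i : Fin (n-1),
        π (σg i) = Equiv.swap (pos0 i) (pos1 i) ∧
        π (vg i) = Equiv.swap (pos0 i) (pos1 i))
include hπ

lemma pi_vgn (k : ℕ) : π (vgn n k) = sperm n k := by
  unfold vgn sperm
  split
  · rename_i h
    rw [(hπ ⟨k, h⟩).2]
    rfl
  · exact map_one π

lemma pi_sgn (k : ℕ) : π (sgn n k) = sperm n k := by
  unfold sgn sperm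
  split
  · rename_i h
    rw [(hπ ⟨k, h⟩).1]
    rfl
  · exact map_one π

lemma pi_Dv (a b : ℕ) : π (Dv n a b) = dperm n a b := by
  unfold Dv dperm
  rw [map_list_prod, List.map_map]
  congr 1
  apply List.map_congr_left
  intro k _
  exact pi_vgn π hπ _

lemma pi_muUp {i j : ℕ} : π (muUp n i j) = 1 := by
  rw [muUp_eq]
  rw [show Dv n (i+1) j * (sgn n i * vgn n i) * Av n (i+1) j
      = Dv n (i+1) j * sgn n i * vgn n i * Av n (i+1) j from by group]
  rw [map_mul, map_mul, map_mul, pi_sgn π hπ, pi_vgn π hπ]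
  calc π (Dv n (i+1) j) * sperm n i * sperm n i * π (Av n (i+1) j)
      = π (Dv n (i+1) j) * (sperm n i * sperm n i) * π (Av n (i+1) j) := by group
    _ = π (Dv n (i+1) j) * π (Av n (i+1) j) := by rw [sperm_sq]; group
    _ = π (Dv n (i+1) j * Av n (i+1) j) := by rw [map_mul]
    _ = 1 := by rw [Dv_mul_Av, map_one]

lemma pi_muG {i j : ℕ} : π (muG n i j) = 1 := by
  unfold muG
  split
  · exact pi_muUp π hπ
  · rw [map_mul, map_mul, pi_muUp π hπ]
    calc π (tw n j i) * 1 * π (tw n j i) = π (tw n j i * tw n j i) := by rw [map_mul]; group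
      _ = 1 := by rw [tw_sq, map_one]

end Pi

end VBAux
namespace VBAux

variable {n : ℕ}

/-- canonical lift of a permutation into the `v`-subgroup of `VB n`. -/
def liftp (n : ℕ) : ℕ → Equiv.Perm (Fin n) → VB n
  | 0, _ => 1
  | (m+1), p =>
    if h : m < n then
      liftp n m (p * (dperm n (p⁻¹ ⟨m, h⟩).1 m)⁻¹) * Dv n (p⁻¹ ⟨m, h⟩).1 m
    else liftp n m p

lemma liftp_succ {m : ℕ} (h : m < n) (p : Equiv.Perm (Fin n)) :
    liftp n (m+1) p
      = liftp n m (p * (dperm n (p⁻¹ ⟨m, h⟩).1 m)⁻¹) * Dv n (p⁻¹ ⟨m, h⟩).1 m := by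
  rw [liftp, dif_pos h]

lemma liftp_one : ∀ m, m ≤ n → liftp n m 1 = 1 := by
  intro m
  induction m with
  | zero => intro _; rfl
  | succ m ih =>
    intro hm
    have h : m < n := by omega
    rw [liftp_succ h]
    have hJ : ((1 : Equiv.Perm (Fin n))⁻¹ ⟨m, h⟩).1 = m := rfl
    rw [hJ, Dv_nil (le_refl m), dperm_nil (le_refl m)]
    simpa using ih (by omega)

section Pi

variable (π : VB n →* Equiv.Perm (Fin n))
variable (hπ : ∀ i : Fin (n-1),
        π (σg i) = Equiv.swap (pos0 i) (pos1 i) ∧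
        π (vg i) = Equiv.swap (pos0 i) (pos1 i))
include hπ

lemma pass_dperm {j k b : ℕ} (hj : j + 1 ≤ k) (hb : k + 1 ≤ b) (hk : k < n - 1) :
    sperm n (k-1) * dperm n j b = dperm n j b * sperm n k := by
  have h := congrArg π (pass_Dv (n := n) (j := j) (k := k) (b := b) hj hb hk)
  rwa [map_mul, map_mul, pi_vgn π hπ, pi_vgn π hπ, pi_Dv π hπ] at h

lemma comm_sperm_dperm {k j b : ℕ} (h : k + 2 ≤ j) :
    Commute (sperm n k) (dperm n j b) := by
  have hc := (comm_v_Dv (n := n) (l := k) (a := j) (b := b) (Or.inl h)).map π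
  rwa [pi_vgn π hπ, pi_Dv π hπ] at hc

/-- The key exchange lemma for the canonical lift. -/
lemma liftp_key : ∀ m, m ≤ n → ∀ (p : Equiv.Perm (Fin n)) (k : ℕ),
    (∀ x : Fin n, m ≤ x.1 → p x = x) → k + 2 ≤ m → k < n - 1 →
    liftp n m p * vgn n k = liftp n m (p * sperm n k) := by
  intro m
  induction m with
  | zero => intro _ p k _ hk2 _; omega
  | succ m ih =>
    intro hm p k hFix hk2 hk
    have h : m < n := by omega
    set J : Fin n := p⁻¹ ⟨m, h⟩ with hJdef
    have hpJ : p J = ⟨m, h⟩ := Equiv.apply_symm_apply p _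
    have hjm : J.1 ≤ m := by
      by_contra hcon
      push_neg at hcon
      have h2 := hFix J (by omega)
      rw [hpJ] at h2
      have h3 : m = J.1 := congrArg Fin.val h2
      omega
    have hFixq : ∀ x : Fin n, m ≤ x.1 → (p * (dperm n J.1 m)⁻¹) x = x := by
      intro x hx
      rw [Equiv.Perm.mul_apply]
      rcases Nat.lt_or_ge m x.1 with hgt | hge
      · have hfix : dperm n J.1 m x = x := dval_lo (Or.inr hgt)
        rw [show (dperm n J.1 m)⁻¹ x = x from (Equiv.Perm.inv_eq_iff_eq).mpr hfix.symm]
        exact hFix x (by omega)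
      · have hxv : x.1 = m := by omega
        have hxm : x = ⟨m, h⟩ := Fin.ext (by simp [hxv])
        have hdJ : dperm n J.1 m J = x := by
          apply Fin.ext
          rw [hxm]
          simpa using dval_j hjm h rfl
        rw [show (dperm n J.1 m)⁻¹ x = J from (Equiv.Perm.inv_eq_iff_eq).mpr hdJ.symm]
        rw [hpJ, hxm]
    have hJ' : (p * sperm n k)⁻¹ ⟨m, h⟩ = sperm n k J := by
      rw [mul_inv_rev, Equiv.Perm.mul_apply, sperm_inv, hJdef]
    rw [liftp_succ h p, liftp_succ h (p * sperm n k), hJ']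
    by_cases hb : J.1 = k
    · -- case J.1 = k
      have hJ'v : (sperm n k J).1 = k + 1 := sperm_left hk hb
      rw [hJ'v, hb]
      have hq : p * (dperm n k m)⁻¹ = p * sperm n k * (dperm n (k+1) m)⁻¹ := by
        rw [dperm_bot (j := k) (b := m) (by omega), mul_inv_rev, sperm_inv]
        group
      rw [← hq, Dv_bot (a := k) (b := m) (by omega)]
      calc liftp n m (p * (dperm n k m)⁻¹) * (Dv n (k+1) m * vgn n k) * vgn n k
          = liftp n m (p * (dperm n k m)⁻¹) * Dv n (k+1) m * (vgn n k * vgn n k) := by group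
        _ = liftp n m (p * (dperm n k m)⁻¹) * Dv n (k+1) m * 1 := by rw [vgn_sq]
        _ = liftp n m (p * (dperm n k m)⁻¹) * Dv n (k+1) m := by group
    by_cases hc : J.1 = k + 1
    · -- case J.1 = k + 1
      have hJ'v : (sperm n k J).1 = k := sperm_right hk hc
      rw [hJ'v, hc]
      have hq : p * sperm n k * (dperm n k m)⁻¹ = p * (dperm n (k+1) m)⁻¹ := by
        rw [dperm_bot (j := k) (b := m) (by omega), mul_inv_rev, sperm_inv]
        calc p * sperm n k * (sperm n k * (dperm n (k+1) m)⁻¹)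
            = p * (sperm n k * sperm n k) * (dperm n (k+1) m)⁻¹ := by group
          _ = p * 1 * (dperm n (k+1) m)⁻¹ := by rw [sperm_sq]
          _ = p * (dperm n (k+1) m)⁻¹ := by group
      rw [hq, Dv_bot (a := k) (b := m) (by omega)]
      group
    -- now J.1 ∉ {k, k+1}
    have hJ'v : sperm n k J = J := sperm_other hb hc
    rw [hJ'v]
    rcases Nat.lt_or_ge J.1 k with ha2 | ha1
    · -- case J.1 < k : use the braid pass
      have hpass := pass_Dv (n := n) (j := J.1) (k := k) (b := m) (by omega) (by omega) hk
      have hppass := pass_dperm π hπ (j := J.1) (k := k) (b := m) (by omega) (by omega) hk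
      have hq' : p * sperm n k * (dperm n J.1 m)⁻¹
          = p * (dperm n J.1 m)⁻¹ * sperm n (k-1) := by
        have hstep : sperm n k * (dperm n J.1 m)⁻¹ = (dperm n J.1 m)⁻¹ * sperm n (k-1) := by
          calc sperm n k * (dperm n J.1 m)⁻¹
              = (dperm n J.1 m)⁻¹ * (sperm n (k-1) * dperm n J.1 m) * (dperm n J.1 m)⁻¹ := by
                rw [hppass]; group
            _ = (dperm n J.1 m)⁻¹ * sperm n (k-1) := by group
        rw [mul_assoc, hstep, ← mul_assoc]
      rw [hq']
      calc liftp n m (p * (dperm n J.1 m)⁻¹) * Dv n J.1 m * vgn n k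
          = liftp n m (p * (dperm n J.1 m)⁻¹) * (Dv n J.1 m * vgn n k) := by group
        _ = liftp n m (p * (dperm n J.1 m)⁻¹) * (vgn n (k-1) * Dv n J.1 m) := by rw [← hpass]
        _ = (liftp n m (p * (dperm n J.1 m)⁻¹) * vgn n (k-1)) * Dv n J.1 m := by group
        _ = liftp n m (p * (dperm n J.1 m)⁻¹ * sperm n (k-1)) * Dv n J.1 m := by
            rw [ih (by omega) _ (k-1) hFixq (by omega) (by omega)]
    · -- case J.1 ≥ k + 2
      have ha : k + 2 ≤ J.1 := by omega
      have hcw : Commute (vgn n k) (Dv n J.1 m) := comm_v_Dv (Or.inl ha)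
      have hcp : Commute (sperm n k) (dperm n J.1 m) := comm_sperm_dperm π hπ ha
      have hq' : p * sperm n k * (dperm n J.1 m)⁻¹
          = p * (dperm n J.1 m)⁻¹ * sperm n k := by
        have := (hcp.inv_right).eq
        rw [mul_assoc, this, ← mul_assoc]
      rw [hq']
      calc liftp n m (p * (dperm n J.1 m)⁻¹) * Dv n J.1 m * vgn n k
          = liftp n m (p * (dperm n J.1 m)⁻¹) * (Dv n J.1 m * vgn n k) := by group
        _ = liftp n m (p * (dperm n J.1 m)⁻¹) * (vgn n k * Dv n J.1 m) := by rw [← hcw.eq]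
        _ = (liftp n m (p * (dperm n J.1 m)⁻¹) * vgn n k) * Dv n J.1 m := by group
        _ = liftp n m (p * (dperm n J.1 m)⁻¹ * sperm n k) * Dv n J.1 m := by
            rw [ih (by omega) _ k hFixq (by omega) (by omega)]

end Pi

end VBAux
namespace VBAux

variable {n : ℕ}

def genset (n : ℕ) : Set (VB n) := { g : VB n | ∃ i j : Fin n, i ≠ j ∧ g = muG n i j }

def Hsub (n : ℕ) : Subgroup (VB n) := Subgroup.closure (genset n)

def Wsub (n : ℕ) : Subgroup (VB n) := Subgroup.closure (Set.range (vg : Fin (n-1) → VB n))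

lemma vgn_fin (t : Fin (n-1)) : vgn n t.1 = vg t := by
  unfold vgn; rw [dif_pos t.2]

lemma sgn_fin (t : Fin (n-1)) : sgn n t.1 = σg t := by
  unfold sgn; rw [dif_pos t.2]

lemma vg_inv (t : Fin (n-1)) : (vg t)⁻¹ = vg t := by
  rw [inv_eq_iff_mul_eq_one]; exact vg_sq t

lemma conj_gen (t : Fin (n-1)) {g : VB n} (hg : g ∈ genset n) :
    vg t * g * (vg t)⁻¹ ∈ genset n := by
  obtain ⟨i, j, hne, rfl⟩ := hg
  have hn1 : 1 ≤ n - 1 := by have := t.2; omega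
  refine ⟨⟨swf t.1 i.1, by have := swf_lt (n := n) (by omega : i.1 ≤ n - 1) t.2; omega⟩,
    ⟨swf t.1 j.1, by have := swf_lt (n := n) (by omega : j.1 ≤ n - 1) t.2; omega⟩, ?_, ?_⟩
  · intro hcon
    apply hne
    have := congrArg Fin.val hcon
    simp only at this
    exact Fin.ext (swf_inj this)
  · rw [vg_inv, ← vgn_fin]
    exact A_muG (by simpa [Fin.ext_iff] using hne) (by omega) (by omega) t.2

lemma conj_H (t : Fin (n-1)) {g : VB n} (hg : g ∈ Hsub n) :
    vg t * g * (vg t)⁻¹ ∈ Hsub n := by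
  induction hg using Subgroup.closure_induction with
  | mem x hx => exact Subgroup.subset_closure (conj_gen t hx)
  | one => simpa using Subgroup.one_mem _
  | mul x y hx hy ihx ihy =>
    have : vg t * (x * y) * (vg t)⁻¹ = (vg t * x * (vg t)⁻¹) * (vg t * y * (vg t)⁻¹) := by group
    rw [this]; exact Subgroup.mul_mem _ ihx ihy
  | inv x hx ihx =>
    have : vg t * x⁻¹ * (vg t)⁻¹ = (vg t * x * (vg t)⁻¹)⁻¹ := by group
    rw [this]; exact Subgroup.inv_mem _ ihx

lemma W_conj {w : VB n} (hw : w ∈ Wsub n) :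
    ∀ g : VB n, (w * g * w⁻¹ ∈ Hsub n ↔ g ∈ Hsub n) := by
  induction hw using Subgroup.closure_induction with
  | mem x hx =>
    obtain ⟨t, rfl⟩ := hx
    intro g
    constructor
    · intro hg
      have h2 := conj_H t hg
      have h3 : vg t * (vg t * g * (vg t)⁻¹) * (vg t)⁻¹ = g := by
        rw [vg_inv]
        calc vg t * (vg t * g * vg t) * vg t
            = (vg t * vg t) * g * (vg t * vg t) := by group
          _ = 1 * g * 1 := by rw [vg_sq]
          _ = g := by group
      rwa [h3] at h2
    · exact conj_H t
  | one => intro g; simp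
  | mul x y hx hy ihx ihy =>
    intro g
    have : x * y * g * (x * y)⁻¹ = x * (y * g * y⁻¹) * x⁻¹ := by group
    rw [this, ihx, ihy]
  | inv x hx ihx =>
    intro g
    have h2 := ihx (x⁻¹ * g * x)
    have h3 : x * (x⁻¹ * g * x) * x⁻¹ = g := by group
    rw [h3] at h2
    have h4 : x⁻¹ * g * x⁻¹⁻¹ = x⁻¹ * g * x := by group
    rw [h4, ← h2]

/-- the subgroup of elements expressible as `h * w` with `h ∈ H` and `w ∈ W`. -/
def Tsub (n : ℕ) : Subgroup (VB n) where
  carrier := { g : VB n | ∃ h ∈ Hsub n, ∃ w ∈ Wsub n, g = h * w }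
  one_mem' := ⟨1, Subgroup.one_mem _, 1, Subgroup.one_mem _, by group⟩
  mul_mem' := by
    rintro a b ⟨h, hH, w, hW, rfl⟩ ⟨h', hH', w', hW', rfl⟩
    refine ⟨h * (w * h' * w⁻¹), ?_, w * w', Subgroup.mul_mem _ hW hW', by group⟩
    exact Subgroup.mul_mem _ hH ((W_conj hW h').mpr hH')
  inv_mem' := by
    rintro a ⟨h, hH, w, hW, rfl⟩
    refine ⟨w⁻¹ * h⁻¹ * w⁻¹⁻¹, ?_, w⁻¹, Subgroup.inv_mem _ hW, by group⟩
    exact (W_conj (Subgroup.inv_mem _ hW) h⁻¹).mpr (Subgroup.inv_mem _ hH)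

lemma sigma_muG (t : Fin (n-1)) : σg t = muG n t.1 (t.1 + 1) * vg t := by
  rw [muG_lt (by omega), muUp_base, sgn_fin, vgn_fin]
  calc σg t = σg t * (vg t * vg t) := by rw [vg_sq]; group
    _ = σg t * vg t * vg t := by group

lemma muG_fin_mem (t : Fin (n-1)) : muG n t.1 (t.1 + 1) ∈ Hsub n := by
  apply Subgroup.subset_closure
  have ht := t.2
  exact ⟨⟨t.1, by omega⟩, ⟨t.1 + 1, by omega⟩, by simp [Fin.ext_iff], rfl⟩

lemma T_top (g : VB n) : g ∈ Tsub n := by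
  apply PresentedGroup.generated_by
  intro x
  rcases x with t | t
  · exact ⟨muG n t.1 (t.1+1), muG_fin_mem t, vg t,
      Subgroup.subset_closure ⟨t, rfl⟩, sigma_muG t⟩
  · exact ⟨1, Subgroup.one_mem _, vg t, Subgroup.subset_closure ⟨t, rfl⟩, (one_mul (vg t)).symm⟩

section Pi

variable (π : VB n →* Equiv.Perm (Fin n))
variable (hπ : ∀ i : Fin (n-1),
        π (σg i) = Equiv.swap (pos0 i) (pos1 i) ∧
        π (vg i) = Equiv.swap (pos0 i) (pos1 i))
include hπ

lemma H_le_ker : Hsub n ≤ MonoidHom.ker π := by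
  apply (Subgroup.closure_le _).mpr
  rintro g ⟨i, j, hne, rfl⟩
  exact pi_muG π hπ

lemma pi_vg (t : Fin (n-1)) : π (vg t) = sperm n t.1 := by
  rw [← vgn_fin]; exact pi_vgn π hπ _

lemma master {w : VB n} (hw : w ∈ Wsub n) :
    ∀ p : Equiv.Perm (Fin n), liftp n n p * w = liftp n n (p * π w) := by
  induction hw using Subgroup.closure_induction with
  | mem x hx =>
    obtain ⟨t, rfl⟩ := hx
    intro p
    rw [pi_vg π hπ, ← vgn_fin]
    exact liftp_key π hπ n le_rfl p t.1 (fun x hx => by have := x.2; omega)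
      (by have := t.2; omega) t.2
  | one => intro p; simp
  | mul x y hx hy ihx ihy =>
    intro p
    calc liftp n n p * (x * y) = (liftp n n p * x) * y := by group
      _ = liftp n n (p * π x) * y := by rw [ihx]
      _ = liftp n n (p * π x * π y) := by rw [ihy]
      _ = liftp n n (p * π (x * y)) := by rw [map_mul, mul_assoc]
  | inv x hx ihx =>
    intro p
    have h2 := ihx (p * π x⁻¹)
    have h3 : p * π x⁻¹ * π x = p := by rw [map_inv]; group
    rw [h3] at h2
    calc liftp n n p * x⁻¹ = liftp n n (p * π x⁻¹) * x * x⁻¹ := by rw [h2]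
      _ = liftp n n (p * π x⁻¹) := by group

lemma W_trivial_of_ker {w : VB n} (hw : w ∈ Wsub n) (hker : π w = 1) : w = 1 := by
  have h1 := master π hπ hw 1
  rw [hker, one_mul, liftp_one n le_rfl] at h1
  rw [← h1, one_mul]

lemma ker_le_H : MonoidHom.ker π ≤ Hsub n := by
  intro g hg
  obtain ⟨h, hH, w, hW, rfl⟩ := T_top (n := n) g
  have hπh : π h = 1 := H_le_ker π hπ hH
  have hπw : π w = 1 := by
    have := MonoidHom.mem_ker.mp hg
    rw [map_mul, hπh, one_mul] at this
    exact this
  rw [W_trivial_of_ker π hπ hW hπw, mul_one]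
  exact hH

end Pi

end VBAux
/-- The pure virtual braid group `VP_n = ker(π : VB_n → S_n)` is generated by the
connecting strings `μ_{ij}` for all `i ≠ j`. -/
theorem stmt_9 (n : ℕ) (π : VB n →* Equiv.Perm (Fin n))
    (hπ : ∀ i : Fin (n-1),
        π (σg i) = Equiv.swap (pos0 i) (pos1 i) ∧
        π (vg i) = Equiv.swap (pos0 i) (pos1 i)) :
    MonoidHom.ker π =
      Subgroup.closure { g : VB n | ∃ i j : Fin n, i ≠ j ∧ g = muG n i j } := by
  exact le_antisymm (VBAux.ker_le_H π hπ) (VBAux.H_le_ker π hπ)
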